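/- Let G be a countable abelian group. Then for every finite subset F ⊆ G and every ε > 0, there exists a finite subset T ⊆ G that is both a tile for G and (F, ε)-invariant, and which moreover contains the identity element e. -/

import Mathlib

open MeasureTheory Filter
open scoped symmDiff Classical

/-- A probability-measure-preserving action of a group `G` on `(X, μ)`:
a homomorphism from `G` to the measure-preserving Borel automorphisms of `(X, μ)`. -/
structure PMP (G : Type*) [Group G] (X : Type*) [MeasurableSpace X]
    (μ : MeasureTheory.Measure X) where
  act : G → X ≃ᵐ X
  act_one : ∀ x : X, act 1 x = x
  act_mul : ∀ g h : G, ∀ x : X, act (g * h) x = act g (act h x)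
  preserves : ∀ g : G, MeasureTheory.MeasurePreserving (act g) μ μ

namespace PMP

variable {G : Type*} [Group G] {X : Type*} [MeasurableSpace X] {μ : MeasureTheory.Measure X}

/-- An action is essentially free if a.e. point has trivial stabilizer. -/
def EssFree (α : PMP G X μ) : Prop :=
  ∀ᵐ x ∂μ, ∀ g : G, g ≠ 1 → α.act g x ≠ x

/-- The orbit of a point under a p.m.p. action. -/
def orbit (α : PMP G X μ) (x : X) : Set X := Set.range fun g => α.act g x

/-- Two actions are orbit equivalent if some measure-preserving automorphism `R`
satisfies `G^α x = R G^β R⁻¹ x` for a.e. `x`. -/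
def OrbitEquiv (α β : PMP G X μ) : Prop :=
  ∃ R : X ≃ᵐ X, MeasureTheory.MeasurePreserving R μ μ ∧
    ∀ᵐ x ∂μ, α.orbit x = R '' β.orbit (R.symm x)

end PMP

/-- A finite subset `T` of a group `G` is a tile if the right translates `Tc`,
`c ∈ C`, partition `G` for a suitable `C ⊆ G`. -/
def IsTile {G : Type*} [Group G] (T : Finset G) : Prop :=
  ∃ C : Set G,
    (C.Pairwise fun c d => Disjoint ((fun t => t * c) '' (T : Set G)) ((fun t => t * d) '' (T : Set G))) ∧
    (⋃ c ∈ C, (fun t => t * c) '' (T : Set G)) = Set.univ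

/-- A Følner sequence: nonempty finite sets that are asymptotically invariant. -/
def IsFolnerSeq {G : Type*} [Group G] (F : ℕ → Finset G) : Prop :=
  (∀ n, (F n).Nonempty) ∧
  ∀ g : G, Filter.Tendsto
    (fun n => ((((F n).image (fun t => g * t)) ∆ (F n)).card : ℝ) / ((F n).card : ℝ))
    Filter.atTop (nhds 0)

/-- `T` is `(F, ε)`-invariant: `|T ∆ gT| < ε |T|` for every `g ∈ F`. -/
def IsInv {G : Type*} [Group G] (F T : Finset G) (ε : ℝ) : Prop :=
  ∀ g ∈ F, (((T ∆ (T.image (fun t => g * t))).card : ℝ)) < ε * T.card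

lemma tile_image {A G : Type*} [Group A] [Group G] (f : A →* G)
    (hf : Function.Injective f) {T : Finset A} (h : IsTile T) :
    IsTile (T.image f) := by
  obtain ⟨CA, hdis, hcov⟩ := h
  obtain ⟨S, hS, -⟩ := Subgroup.exists_isComplement_right f.range 1
  refine ⟨{x | ∃ c ∈ CA, ∃ s ∈ S, x = f c * s}, ?_, ?_⟩
  · rintro x ⟨c₁, hc₁, s₁, hs₁, rfl⟩ y ⟨c₂, hc₂, s₂, hs₂, rfl⟩ hxy
    rw [Set.disjoint_left]
    rintro z ⟨t₁, ht₁, hz₁⟩ ⟨t₂, ht₂, hz₂⟩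
    simp only [Finset.coe_image, Set.mem_image] at ht₁ ht₂
    obtain ⟨u₁, hu₁, rfl⟩ := ht₁
    obtain ⟨u₂, hu₂, rfl⟩ := ht₂
    -- z = f(u₁ c₁) * s₁ = f(u₂ c₂) * s₂
    have key : ((⟨f (u₁ * c₁), u₁ * c₁, rfl⟩ : f.range), (⟨s₁, hs₁⟩ : S)) =
        ((⟨f (u₂ * c₂), u₂ * c₂, rfl⟩ : f.range), (⟨s₂, hs₂⟩ : S)) := by
      apply hS.1
      simp only [map_mul] at hz₁ hz₂ ⊢
      rw [← mul_assoc] at hz₁ hz₂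
      exact hz₁.trans hz₂.symm
    have h1 : f (u₁ * c₁) = f (u₂ * c₂) := congrArg (fun p => (p.1 : G)) key
    have h2 : s₁ = s₂ := congrArg (fun p => (p.2 : G)) key
    have h3 : u₁ * c₁ = u₂ * c₂ := hf h1
    by_cases hc : c₁ = c₂
    · exact hxy (by rw [hc, h2])
    · have hd : Disjoint ((fun t => t * c₁) '' (T : Set A)) ((fun t => t * c₂) '' (T : Set A)) :=
        hdis hc₁ hc₂ hc
      exact Set.disjoint_left.mp hd ⟨u₁, hu₁, rfl⟩ ⟨u₂, hu₂, h3.symm⟩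
  · apply Set.eq_univ_of_forall
    intro g
    obtain ⟨⟨⟨h', ⟨a, rfl⟩⟩, ⟨s, hs⟩⟩, hprod⟩ := (hS.existsUnique g).exists
    have ha : a ∈ (Set.univ : Set A) := Set.mem_univ a
    rw [← hcov] at ha
    simp only [Set.mem_iUnion, Set.mem_image] at ha
    obtain ⟨c, hc, t, ht, rfl⟩ := ha
    refine Set.mem_iUnion.2 ⟨f c * s, Set.mem_iUnion.2 ⟨⟨c, hc, s, hs, rfl⟩, ⟨f t, ?_, ?_⟩⟩⟩
    · rw [Finset.coe_image]
      exact Set.mem_image_of_mem f (Finset.mem_coe.2 ht)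
    · simp only at hprod ⊢
      rw [← hprod, map_mul, mul_assoc]

lemma inv_image {A G : Type*} [Group A] [Group G] (f : A →* G)
    (hf : Function.Injective f) {F₀ T : Finset A} {ε : ℝ}
    (h : IsInv F₀ T ε) : IsInv (F₀.image f) (T.image f) ε := by
  intro g hg
  obtain ⟨a, ha, rfl⟩ := Finset.mem_image.1 hg
  have him : (T.image f).image (fun t => f a * t) = (T.image fun t => a * t).image f := by
    rw [Finset.image_image, Finset.image_image]
    exact Finset.image_congr (fun x _ => (map_mul f a x).symm)
  rw [him, ← Finset.image_symmDiff _ _ hf, Finset.card_image_of_injective _ hf,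
    Finset.card_image_of_injective _ hf]
  exact h a ha


def AddIsTile {A : Type*} [AddGroup A] (T : Finset A) : Prop :=
  ∃ C : Set A,
    (C.Pairwise fun c d => Disjoint ((fun t => t + c) '' (T : Set A)) ((fun t => t + d) '' (T : Set A))) ∧
    (⋃ c ∈ C, (fun t => t + c) '' (T : Set A)) = Set.univ

def AddIsInv {A : Type*} [AddGroup A] (F T : Finset A) (ε : ℝ) : Prop :=
  ∀ g ∈ F, (((T ∆ (T.image (fun t => g + t))).card : ℝ)) < ε * T.card

lemma bridge_tile {A : Type*} [AddGroup A] {T : Finset A} (h : AddIsTile T) :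
    IsTile (T.map (Multiplicative.ofAdd).toEmbedding) := by
  obtain ⟨C, hdis, hcov⟩ := h
  refine ⟨Multiplicative.ofAdd '' C, ?_, ?_⟩
  · rintro x ⟨c₁, hc₁, rfl⟩ y ⟨c₂, hc₂, rfl⟩ hne
    have hc : c₁ ≠ c₂ := fun h => hne (congrArg _ h)
    have hd : Disjoint ((fun t => t + c₁) '' (T : Set A)) ((fun t => t + c₂) '' (T : Set A)) :=
      hdis hc₁ hc₂ hc
    rw [Set.disjoint_left]
    rintro z ⟨t₁, ht₁, hz₁⟩ ⟨t₂, ht₂, hz₂⟩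
    rw [Finset.coe_map, Set.mem_image] at ht₁ ht₂
    obtain ⟨a₁, ha₁, rfl⟩ := ht₁
    obtain ⟨a₂, ha₂, rfl⟩ := ht₂
    have hz : Multiplicative.ofAdd a₁ * Multiplicative.ofAdd c₁
        = Multiplicative.ofAdd a₂ * Multiplicative.ofAdd c₂ := hz₁.trans hz₂.symm
    have hz' : a₁ + c₁ = a₂ + c₂ := by
      have := congrArg Multiplicative.toAdd hz
      simpa using this
    exact Set.disjoint_left.mp hd ⟨a₁, ha₁, rfl⟩ ⟨a₂, ha₂, hz'.symm⟩
  · apply Set.eq_univ_of_forall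
    intro x
    have hx : x.toAdd ∈ (Set.univ : Set A) := Set.mem_univ _
    rw [← hcov] at hx
    simp only [Set.mem_iUnion, Set.mem_image] at hx
    obtain ⟨c, hc, t, ht, hteq⟩ := hx
    refine Set.mem_iUnion.2 ⟨Multiplicative.ofAdd c,
      Set.mem_iUnion.2 ⟨⟨c, hc, rfl⟩, ⟨Multiplicative.ofAdd t, ?_, ?_⟩⟩⟩
    · rw [Finset.coe_map, Set.mem_image]
      exact ⟨t, ht, rfl⟩
    · show Multiplicative.ofAdd t * Multiplicative.ofAdd c = x
      apply Multiplicative.toAdd.injective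
      simpa using hteq
lemma bridge_inv {A : Type*} [AddGroup A] {F T : Finset A} {ε : ℝ} (h : AddIsInv F T ε) :
    IsInv (F.map (Multiplicative.ofAdd).toEmbedding) (T.map (Multiplicative.ofAdd).toEmbedding) ε := by
  intro g hg
  rw [Finset.mem_map] at hg
  obtain ⟨a, ha, rfl⟩ := hg
  have him : (T.map (Multiplicative.ofAdd).toEmbedding).image
      (fun t => (Multiplicative.ofAdd).toEmbedding a * t)
      = (T.image fun t => a + t).map (Multiplicative.ofAdd).toEmbedding := by
    rw [Finset.map_eq_image, Finset.map_eq_image, Finset.image_image, Finset.image_image]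
    rfl
  erw [him]
  erw [Finset.map_eq_image, Finset.map_eq_image,
    ← Finset.image_symmDiff _ _ (Multiplicative.ofAdd.toEmbedding.injective),
    Finset.card_image_of_injective _ (Multiplicative.ofAdd.toEmbedding.injective),
    Finset.card_image_of_injective _ (Multiplicative.ofAdd.toEmbedding.injective)]
  exact h a ha

set_option maxHeartbeats 2000000 in
lemma add_box_lemma (n : ℕ) (M : Type*) [AddCommGroup M] [Fintype M]
    (F₀ : Finset ((Fin n → ℤ) × M)) (ε : ℝ) (hε : 0 < ε) :
    ∃ T₀ : Finset ((Fin n → ℤ) × M),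
      AddIsTile T₀ ∧ AddIsInv F₀ T₀ ε ∧ ((0, 0) : (Fin n → ℤ) × M) ∈ T₀ := by
  set W : ℕ := F₀.sup (fun g => Finset.univ.sup fun i => (g.1 i).natAbs) with hW
  obtain ⟨N, hNgt⟩ := exists_nat_gt (max ((W : ℝ) + 1) (2 * n * W / ε))
  have hWN : (W : ℝ) + 1 ≤ N := le_of_lt (lt_of_le_of_lt (le_max_left _ _) hNgt)
  have hWNnat : W < N := by
    have : (W : ℝ) < N := by linarith
    exact_mod_cast this
  have hNpos : 0 < N := lt_of_le_of_lt (Nat.zero_le W) hWNnat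
  have hNposR : (0 : ℝ) < N := by exact_mod_cast hNpos
  have hkey : 2 * n * W < ε * N := by
    have := lt_of_le_of_lt (le_max_right ((W : ℝ) + 1) _) hNgt
    rw [div_lt_iff₀ hε] at this
    linarith
  set B : Finset (Fin n → ℤ) := Fintype.piFinset (fun _ : Fin n => Finset.Ico (0 : ℤ) (N : ℤ)) with hB
  refine ⟨B ×ˢ Finset.univ, ?_, ?_, ?_⟩
  · -- AddIsTile
    refine ⟨{x | (∀ i, (N : ℤ) ∣ x.1 i) ∧ x.2 = 0}, ?_, ?_⟩
    · rintro c₁ ⟨hc₁, hc₁'⟩ c₂ ⟨hc₂, hc₂'⟩ hne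
      rw [Set.disjoint_left]
      rintro z ⟨t₁, ht₁, hz₁⟩ ⟨t₂, ht₂, hz₂⟩
      apply hne
      have hadd : t₁ + c₁ = t₂ + c₂ := hz₁.trans hz₂.symm
      simp only [Finset.coe_product, Set.mem_prod, Finset.mem_coe, hB,
        Fintype.mem_piFinset, Finset.mem_Ico] at ht₁ ht₂
      have h1 : c₁.1 = c₂.1 := by
        funext i
        have hcoord : t₁.1 i + c₁.1 i = t₂.1 i + c₂.1 i :=
          congrFun (congrArg Prod.fst hadd) i
        obtain ⟨k₁, hk₁⟩ := hc₁ i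
        obtain ⟨k₂, hk₂⟩ := hc₂ i
        have e₁ := (ht₁.1 i).1
        have e₂ := (ht₁.1 i).2
        have e₃ := (ht₂.1 i).1
        have e₄ := (ht₂.1 i).2
        rw [hk₁, hk₂] at hcoord ⊢
        have : k₁ = k₂ := by
          rcases lt_trichotomy k₁ k₂ with h | h | h
          · nlinarith [Int.add_one_le_iff.mpr h]
          · exact h
          · nlinarith [Int.add_one_le_iff.mpr h]
        rw [this]
      have h2 : c₁.2 = c₂.2 := hc₁'.trans hc₂'.symm
      exact Prod.ext h1 h2
    · apply Set.eq_univ_of_forall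
      intro v
      set c : (Fin n → ℤ) × M := ((fun i => (N : ℤ) * (v.1 i / N)), (0 : M)) with hc
      set t : (Fin n → ℤ) × M := ((fun i => v.1 i % N), v.2) with ht
      have hcC : (∀ i, (N : ℤ) ∣ c.1 i) ∧ c.2 = 0 :=
        ⟨fun i => ⟨v.1 i / N, rfl⟩, rfl⟩
      refine Set.mem_iUnion.2 ⟨c, Set.mem_iUnion.2 ⟨hcC, ⟨t, ?_, ?_⟩⟩⟩
      · simp only [Finset.coe_product, Set.mem_prod, Finset.mem_coe, hB,
          Fintype.mem_piFinset, Finset.mem_Ico, ht]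
        refine ⟨fun i => ⟨Int.emod_nonneg _ (by positivity), ?_⟩, Finset.mem_univ _⟩
        exact Int.emod_lt_of_pos _ (by exact_mod_cast hNpos)
      · show t + c = v
        refine Prod.ext ?_ (by simp [ht, hc])
        funext i
        exact Int.emod_add_mul_ediv (v.1 i) N
  · -- AddIsInv
    intro g hg
    set w := g.1 with hw'
    have hwW : ∀ i, (w i).natAbs ≤ W := by
      intro i
      calc (w i).natAbs ≤ Finset.univ.sup (fun i => (g.1 i).natAbs) :=
            Finset.le_sup (f := fun i => (g.1 i).natAbs) (Finset.mem_univ i)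
        _ ≤ W := Finset.le_sup (f := fun g => Finset.univ.sup fun i => (g.1 i).natAbs) hg
    set B' : Finset (Fin n → ℤ) := Fintype.piFinset (fun i => Finset.Ico (w i) (w i + N)) with hB'
    have himB : B.image (fun y => w + y) = B' := by
      ext y
      simp only [hB, hB', Finset.mem_image, Fintype.mem_piFinset, Finset.mem_Ico]
      constructor
      · rintro ⟨z, hz, rfl⟩ i
        have := hz i
        simp only [Pi.add_apply]
        omega
      · intro h
        refine ⟨y - w, fun i => ?_, by abel⟩
        have := h i
        simp only [Pi.sub_apply]
        omega
    have hmemiff : ∀ y₁ y₂, (∃ p₁ p₂, p₁ ∈ B ∧ g + (p₁, p₂) = (y₁, y₂)) ↔ y₁ ∈ B' := by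
      intro y₁ y₂
      constructor
      · rintro ⟨p₁, p₂, hp₁, heq⟩
        have h1 : w + p₁ = y₁ := congrArg Prod.fst heq
        rw [← himB]
        exact Finset.mem_image.2 ⟨p₁, hp₁, h1⟩
      · intro hy
        rw [← himB] at hy
        obtain ⟨p₁, hp₁, hp₁e⟩ := Finset.mem_image.1 hy
        exact ⟨p₁, y₂ - g.2, hp₁, Prod.ext hp₁e (by simp)⟩
    have main : ((((B ∆ B') ×ˢ (Finset.univ : Finset M)).card : ℕ) : ℝ)
        < ε * (((B ×ˢ (Finset.univ : Finset M)).card : ℕ) : ℝ) := by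
      rw [Finset.card_product, Finset.card_product]
      have hcardB : B.card = N ^ n := by
        rw [hB, Fintype.card_piFinset]
        simp [Int.card_Ico]
      have hcardB' : B'.card = N ^ n := by
        rw [← himB, Finset.card_image_of_injective _ (add_right_injective w), hcardB]
      have hinter : B ∩ B' = Fintype.piFinset
          (fun i => Finset.Ico (0 : ℤ) N ∩ Finset.Ico (w i) (w i + N)) := by
        ext y
        simp only [Finset.mem_inter, hB, hB', Fintype.mem_piFinset, forall_and]
      have hcardinter : (B ∩ B').card = ∏ i : Fin n, (N - (w i).natAbs) := by
        rw [hinter, Fintype.card_piFinset]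
        congr 1
        funext i
        rw [Finset.Ico_inter_Ico, Int.card_Ico]
        have := hwW i
        omega
      have hprodge : (N - W) ^ n ≤ ∏ i : Fin n, (N - (w i).natAbs) := by
        have hconst : (N - W) ^ n = ∏ _i : Fin n, (N - W) := by
          simp [Finset.prod_const, Finset.card_univ]
        rw [hconst]
        exact Finset.prod_le_prod' fun i _ => by have := hwW i; omega
      have hsdcard : ((B ∆ B').card : ℝ) = (B.card : ℝ) + B'.card - 2 * (B ∩ B').card := by
        rw [symmDiff_def, Finset.sup_eq_union]
        rw [Finset.card_union_of_disjoint disjoint_sdiff_sdiff]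
        have h1 := Finset.card_sdiff_add_card_inter B B'
        have h2 := Finset.card_sdiff_add_card_inter B' B
        rw [Finset.inter_comm B' B] at h2
        push_cast [← h1, ← h2]
        ring
      have hintR : ((N : ℝ) - W) ^ n ≤ ((B ∩ B').card : ℝ) := by
        rw [hcardinter]
        calc ((N : ℝ) - W) ^ n = (((N - W : ℕ) : ℝ)) ^ n := by
              rw [Nat.cast_sub (le_of_lt hWNnat)]
            _ = (((N - W) ^ n : ℕ) : ℝ) := by push_cast; ring
            _ ≤ _ := by exact_mod_cast hprodge
      have hbern : (1 : ℝ) - n * ((W : ℝ) / N) ≤ (1 - (W : ℝ) / N) ^ n := by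
        have := one_add_mul_le_pow (a := -((W : ℝ) / N)) (by
          have h1 : (W : ℝ) / N ≤ 1 := by
            rw [div_le_one hNposR]; linarith
          linarith) n
        calc (1 : ℝ) - n * ((W : ℝ) / N) = 1 + n * (-((W : ℝ) / N)) := by ring
          _ ≤ (1 + -((W : ℝ) / N)) ^ n := this
          _ = (1 - (W : ℝ) / N) ^ n := by ring_nf
      have hNW : ((N : ℝ) - W) ^ n = (N : ℝ) ^ n * (1 - (W : ℝ) / N) ^ n := by
        rw [← mul_pow]
        congr 1
        field_simp
      have hfinal : ((B ∆ B').card : ℝ) < ε * (N : ℝ) ^ n := by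
        rw [hsdcard, hcardB, hcardB']
        have h1 : ((N : ℝ) ^ n : ℝ) * (1 - n * ((W : ℝ) / N)) ≤ ((B ∩ B').card : ℝ) := by
          calc ((N : ℝ) ^ n) * (1 - n * ((W : ℝ) / N)) ≤ ((N : ℝ) ^ n) * (1 - (W : ℝ) / N) ^ n :=
                mul_le_mul_of_nonneg_left hbern (by positivity)
            _ = ((N : ℝ) - W) ^ n := hNW.symm
            _ ≤ _ := hintR
        have h2 : 2 * ((N : ℝ) ^ n) * ((n : ℝ) * ((W : ℝ) / N)) < ε * (N : ℝ) ^ n := by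
          have h3 : 2 * (n : ℝ) * W / N < ε := by
            rw [div_lt_iff₀ hNposR]; linarith
          have h4 : (0 : ℝ) < (N : ℝ) ^ n := by positivity
          calc 2 * ((N : ℝ) ^ n) * ((n : ℝ) * ((W : ℝ) / N))
              = (2 * (n : ℝ) * W / N) * (N : ℝ) ^ n := by ring
            _ < ε * (N : ℝ) ^ n := by exact mul_lt_mul_of_pos_right h3 h4
        push_cast
        nlinarith [h1, h2]
      have hMpos : (0 : ℝ) < (Fintype.card M : ℝ) := by
        exact_mod_cast Fintype.card_pos
      push_cast
      calc ((B ∆ B').card : ℝ) * (Fintype.card M : ℝ)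
          < (ε * (N : ℝ) ^ n) * (Fintype.card M : ℝ) :=
            mul_lt_mul_of_pos_right hfinal hMpos
        _ = ε * ((N ^ n : ℕ) * (Fintype.card M : ℝ)) := by push_cast; ring
        _ = ε * ((B.card : ℝ) * (Fintype.card M : ℝ)) := by rw [hcardB]
    convert main using 3
    · ext ⟨y₁, y₂⟩
      simp only [Finset.mem_symmDiff, Finset.mem_product, Finset.mem_image, Finset.mem_univ,
        and_true, Prod.exists]
      rw [hmemiff y₁ y₂]
  · -- 0 ∈ T₀
    simp only [Finset.mem_product, hB, Fintype.mem_piFinset, Finset.mem_Ico,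
      Finset.mem_univ, and_true]
    intro i
    refine ⟨le_refl 0, ?_⟩
    show (0 : ℤ) < (N : ℤ)
    exact_mod_cast hNpos

/-- In a countable abelian group, for every finite `F ⊆ G` and
`ε > 0` there is a tile `T` for `G` that is `(F, ε)`-invariant and contains the
identity. -/
theorem exists_invariant_tile_containing_one
    {G : Type*} [CommGroup G] [Countable G]
    (F : Finset G) (ε : ℝ) (hε : 0 < ε) :
    ∃ T : Finset G, IsTile T ∧ IsInv F T ε ∧ (1 : G) ∈ T := by
  set H : Subgroup G := Subgroup.closure (F : Set G) with hH
  haveI : Group.FG ↥H := Group.closure_finset_fg F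
  obtain ⟨n, ι, fι, p, hp, e, ⟨ψ⟩⟩ :=
    AddCommGroup.equiv_free_prod_directSum_zmod (Additive ↥H)
  letI := fι
  letI := Classical.decEq ι
  haveI : ∀ i, NeZero (p i ^ e i) := fun i => NeZero.of_pos (pow_pos (hp i).pos _)
  set M := DirectSum ι fun i => ZMod (p i ^ e i) with hM
  haveI : Fintype M := Fintype.ofEquiv (∀ i, ZMod (p i ^ e i)) DFinsupp.equivFunOnFintype.symm
  set κ : (Fin n → ℤ) × M ≃+ Additive ↥H :=
    (AddEquiv.prodCongr (Finsupp.addEquivFunOnFinite).symm (AddEquiv.refl M)).trans ψ.symm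
    with hκ
  set μeq : Multiplicative ((Fin n → ℤ) × M) ≃* ↥H :=
    (AddEquiv.toMultiplicative κ).trans (MulEquiv.multiplicativeAdditive ↥H) with hμeq
  set f : Multiplicative ((Fin n → ℤ) × M) →* G := (Subgroup.subtype H).comp μeq.toMonoidHom
    with hf'
  have hf : Function.Injective f := fun a b hab =>
    μeq.injective (Subgroup.subtype_injective H hab)
  set F₀ : Finset ((Fin n → ℤ) × M) :=
    F.attach.image (fun g =>
      Multiplicative.toAdd (μeq.symm ⟨g.1, Subgroup.subset_closure g.2⟩)) with hF₀
  obtain ⟨T₀, htile, hinv, h0⟩ := add_box_lemma n M F₀ ε hε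
  refine ⟨(T₀.map (Multiplicative.ofAdd).toEmbedding).image f, ?_, ?_, ?_⟩
  · exact tile_image f hf (bridge_tile htile)
  · intro g hg
    have hmem : g ∈ ((F₀.map (Multiplicative.ofAdd).toEmbedding).image f) := by
      refine Finset.mem_image.2 ⟨μeq.symm ⟨g, Subgroup.subset_closure hg⟩, ?_, ?_⟩
      · rw [Finset.mem_map]
        refine ⟨Multiplicative.toAdd (μeq.symm ⟨g, Subgroup.subset_closure hg⟩), ?_, rfl⟩
        exact Finset.mem_image.2 ⟨⟨g, hg⟩, F.mem_attach _, rfl⟩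
      · show (Subgroup.subtype H) (μeq (μeq.symm ⟨g, Subgroup.subset_closure hg⟩)) = g
        rw [MulEquiv.apply_symm_apply]
        rfl
    exact inv_image f hf (bridge_inv hinv) g hmem
  · refine Finset.mem_image.2 ⟨1, ?_, map_one f⟩
    rw [Finset.mem_map_equiv]
    exact h0
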